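/- Let n ≥ k and t be natural numbers. Consider two random experiments producing a transcript ((x₁, f(x₁)), …, (x_t, f(x_t))), where x₁, …, x_t are independent uniformly random elements of Fin n → Bool in both experiments: in experiment H, f is drawn uniformly from all functions (Fin n → Bool) → Bool that depend only on the first k coordinates; in experiment G, f is drawn uniformly from all functions (Fin n → Bool) → Bool. Then the total variation distance between the distributions of the transcript in the two experiments is at most t(t−1)/2^{k+1}. -/

import Mathlib

open Finset Function

section counting
variable {D Y ι : Type*} [Fintype D] [DecidableEq D] [Fintype Y] [DecidableEq Y] [Fintype ι]

private noncomputable def patch (xs : ι → D) (f : D → Y) (c : ι → Y) (x : D) : Y :=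
  if h : ∃ j, xs j = x then c h.choose else f x

private lemma patch_eval {xs : ι → D} (hinj : Injective xs) (f : D → Y) (c : ι → Y) (j : ι) :
    patch xs f c (xs j) = c j := by
  have h : ∃ j', xs j' = xs j := ⟨j, rfl⟩
  rw [patch, dif_pos h]
  exact congrArg c (hinj h.choose_spec)

private lemma patch_not {xs : ι → D} (f : D → Y) (c : ι → Y) {x : D}
    (h : ¬ ∃ j, xs j = x) : patch xs f c x = f x := dif_neg h

lemma card_filter_eval (xs : ι → D) (hinj : Injective xs) (bs : ι → Y) :
    (univ.filter (fun f : D → Y => ∀ j, f (xs j) = bs j)).card * (Fintype.card Y) ^ (Fintype.card ι)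
      = (Fintype.card Y) ^ (Fintype.card D) := by
  classical
  have e : (D → Y) ≃ {f : D → Y // ∀ j, f (xs j) = bs j} × (ι → Y) :=
  { toFun := fun f => (⟨patch xs f bs, fun j => patch_eval hinj f bs j⟩, fun j => f (xs j))
    invFun := fun gc => patch xs gc.1.1 gc.2
    left_inv := fun f => by
      funext x
      by_cases h : ∃ j, xs j = x
      · obtain ⟨j, rfl⟩ := h
        simp [patch_eval hinj]
      · simp [patch_not _ _ h]
    right_inv := fun gc => by
      obtain ⟨⟨g, hg⟩, c⟩ := gc
      refine Prod.ext (Subtype.ext ?_) ?_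
      · funext x
        by_cases h : ∃ j, xs j = x
        · obtain ⟨j, rfl⟩ := h
          simp [patch_eval hinj, hg j]
        · simp [patch_not _ _ h]
      · funext j
        simp [patch_eval hinj] }
  have hc := Fintype.card_congr e
  rw [Fintype.card_fun, Fintype.card_prod, Fintype.card_fun, Fintype.card_subtype] at hc
  exact hc.symm

end counting

section junta
variable {n k : ℕ}

private def proj (hkn : k ≤ n) (x : Fin n → Bool) (i : Fin k) : Bool := x (Fin.castLE hkn i)

private def extn (z : Fin k → Bool) (i : Fin n) : Bool :=
  if h : (i : ℕ) < k then z ⟨i, h⟩ else false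

private lemma proj_extn (hkn : k ≤ n) (z : Fin k → Bool) : proj hkn (extn z) = z := by
  funext i
  simp [proj, extn, Fin.castLE, i.2]

private lemma junta_fix (hkn : k ≤ n)
    {f : (Fin n → Bool) → Bool}
    (hf : ∀ x y : Fin n → Bool, (∀ i : Fin n, (i : ℕ) < k → x i = y i) → f x = f y)
    (x : Fin n → Bool) : f (extn (proj hkn x)) = f x := by
  apply hf
  intro i hi
  simp [extn, proj, hi, Fin.castLE]

lemma card_junta (hkn : k ≤ n) (Q : ((Fin n → Bool) → Bool) → Prop) [DecidablePred Q] :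
    (univ.filter (fun f : (Fin n → Bool) → Bool =>
        (∀ x y : Fin n → Bool, (∀ i : Fin n, (i : ℕ) < k → x i = y i) → f x = f y) ∧ Q f)).card
      = (univ.filter (fun g : (Fin k → Bool) → Bool => Q (fun x => g (proj hkn x)))).card := by
  apply Finset.card_bij' (fun f _ => fun z => f (extn z)) (fun g _ => fun x => g (proj hkn x))
  · intro f hf
    simp only [mem_filter, mem_univ, true_and] at hf ⊢
    have : (fun x => f (extn (proj hkn x))) = f := funext (junta_fix hkn hf.1)
    rw [this]
    exact hf.2
  · intro g hg
    simp only [mem_filter, mem_univ, true_and] at hg ⊢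
    constructor
    · intro x y hxy
      have : proj hkn x = proj hkn y := by
        funext i
        exact hxy (Fin.castLE hkn i) (by simpa using i.2)
      simp [this]
    · exact hg
  · intro f hf
    simp only [mem_filter, mem_univ, true_and] at hf
    exact funext (junta_fix hkn hf.1)
  · intro g hg
    funext z
    show g (proj hkn (extn z)) = g z
    rw [proj_extn hkn]

end junta

section sums
variable {D Y ι : Type*} [Fintype D] [DecidableEq D] [Fintype Y] [DecidableEq Y] [Fintype ι]
  [DecidableEq ι]

lemma sum_card_filter_eval (F : Finset (D → Y)) (xs : ι → D) :
    ∑ bs : ι → Y, (F.filter (fun f => ∀ j, f (xs j) = bs j)).card = F.card := by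
  simp only [Finset.card_filter]
  rw [Finset.sum_comm]
  have h1 : ∀ f : D → Y,
      (∑ bs : ι → Y, if (∀ j, f (xs j) = bs j) then 1 else 0) = 1 := by
    intro f
    have : ∀ bs : ι → Y, (∀ j, f (xs j) = bs j) ↔ (fun j => f (xs j)) = bs := by
      intro bs; rw [funext_iff]
    simp only [this]
    rw [Finset.sum_ite_eq]
    simp
  calc (∑ f ∈ F, ∑ bs : ι → Y, if (∀ j, f (xs j) = bs j) then 1 else 0)
      = ∑ f ∈ F, 1 := by
        apply Finset.sum_congr rfl
        intro f _; exact h1 f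
    _ = F.card := by simp

end sums

section pairs

lemma gauss_sum_real (t : ℕ) :
    ∑ b : Fin t, ((b : ℕ) : ℝ) = (t : ℝ) * ((t : ℝ) - 1) / 2 := by
  rw [Fin.sum_univ_eq_sum_range (fun i => (i : ℝ))]
  induction t with
  | zero => simp
  | succ m ih =>
    rw [Finset.sum_range_succ, ih]
    push_cast
    ring

lemma card_lt_pairs_le (t : ℕ) :
    ((univ.filter (fun p : Fin t × Fin t => p.1 < p.2)).card : ℝ)
      = (t : ℝ) * ((t : ℝ) - 1) / 2 := by
  have h1 : (univ.filter (fun p : Fin t × Fin t => p.1 < p.2)).card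
      = ∑ b : Fin t, (b : ℕ) := by
    rw [Finset.card_filter, Fintype.sum_prod_type_right]
    apply Finset.sum_congr rfl
    intro b _
    rw [← Finset.card_filter]
    have : univ.filter (fun a : Fin t => a < b) = Finset.Iio b := by
      ext a; simp
    rw [this, Fin.card_Iio]
  rw [h1, ← gauss_sum_real t]
  push_cast
  rfl

end pairs

section collision
variable {n k t : ℕ}

private lemma card_fiber (hkn : k ≤ n) {p q : Fin t} (hpq : p ≠ q) (a : Fin n → Bool) :
    (univ.filter (fun xs : Fin t → Fin n → Bool =>
        xs p = a ∧ ∀ i : Fin k, xs q (Fin.castLE hkn i) = a (Fin.castLE hkn i))).card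
      * 2 ^ (n + k) = 2 ^ (t * n) := by
  classical
  set u : Fin n ⊕ Fin k → Fin t × Fin n :=
    Sum.elim (fun i => (p, i)) (fun i => (q, Fin.castLE hkn i)) with hu
  have huinj : Injective u := by
    intro s s' hss
    cases s with
    | inl i => cases s' with
      | inl i' => simpa [u, Prod.ext_iff] using hss
      | inr i' => exact absurd (congrArg Prod.fst hss) (by simpa [u] using hpq)
    | inr i => cases s' with
      | inl i' => exact absurd (congrArg Prod.fst hss) (by simpa [u] using hpq.symm)
      | inr i' =>
        have := (Prod.ext_iff.1 hss).2
        simp only [u, Sum.elim_inr] at this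
        exact congrArg Sum.inr (Fin.castLE_injective hkn this)
  set v : Fin n ⊕ Fin k → Bool := Sum.elim a (fun i => a (Fin.castLE hkn i)) with hv
  have key := card_filter_eval u huinj v
  simp only [Fintype.card_sum, Fintype.card_fin, Fintype.card_bool, Fintype.card_prod] at key
  have hcards : (univ.filter (fun xs : Fin t → Fin n → Bool =>
        xs p = a ∧ ∀ i : Fin k, xs q (Fin.castLE hkn i) = a (Fin.castLE hkn i))).card
      = (univ.filter (fun F : Fin t × Fin n → Bool => ∀ s, F (u s) = v s)).card := by
    rw [← Fintype.card_subtype, ← Fintype.card_subtype]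
    apply Fintype.card_congr
    apply Equiv.subtypeEquiv (Equiv.curry (Fin t) (Fin n) Bool).symm
    intro F
    constructor
    · rintro ⟨h1, h2⟩ s
      cases s with
      | inl i => simp [u, v, Equiv.curry, ← h1]
      | inr i => simpa [u, v, Equiv.curry] using h2 i
    · intro h
      constructor
      · funext i
        simpa [u, v, Equiv.curry] using h (Sum.inl i)
      · intro i
        simpa [u, v, Equiv.curry] using h (Sum.inr i)
  rw [hcards]
  exact key

lemma card_collision (hkn : k ≤ n) {p q : Fin t} (hpq : p ≠ q) :
    (univ.filter (fun xs : Fin t → Fin n → Bool =>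
        ∀ i : Fin k, xs p (Fin.castLE hkn i) = xs q (Fin.castLE hkn i))).card
      * 2 ^ (n + k) = 2 ^ n * 2 ^ (t * n) := by
  classical
  rw [Finset.card_eq_sum_card_fiberwise
    (f := fun xs => xs p) (t := univ) (fun x _ => mem_univ _)]
  rw [Finset.sum_mul]
  have : ∀ a : Fin n → Bool,
      ((univ.filter (fun xs : Fin t → Fin n → Bool =>
        ∀ i : Fin k, xs p (Fin.castLE hkn i) = xs q (Fin.castLE hkn i))).filter
          (fun xs => xs p = a)).card * 2 ^ (n + k) = 2 ^ (t * n) := by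
    intro a
    rw [Finset.filter_filter]
    have heq : (univ.filter (fun xs : Fin t → Fin n → Bool =>
        (∀ i : Fin k, xs p (Fin.castLE hkn i) = xs q (Fin.castLE hkn i)) ∧ xs p = a))
      = (univ.filter (fun xs : Fin t → Fin n → Bool =>
        xs p = a ∧ ∀ i : Fin k, xs q (Fin.castLE hkn i) = a (Fin.castLE hkn i))) := by
      apply Finset.filter_congr
      intro xs _
      constructor
      · rintro ⟨h1, h2⟩
        exact ⟨h2, fun i => by rw [← h2]; exact (h1 i).symm⟩
      · rintro ⟨h1, h2⟩
        exact ⟨fun i => by rw [h1]; exact (h2 i).symm, h1⟩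
    rw [heq]
    exact card_fiber hkn hpq a
  rw [Finset.sum_congr rfl (fun a _ => this a)]
  simp [Finset.card_univ]

end collision

lemma filter_eq_filter {α : Type*} {p q : α → Prop} {i1 : DecidablePred p} {i2 : DecidablePred q}
    (h : ∀ a, p a ↔ q a) (s : Finset α) : @Finset.filter α p i1 s = @Finset.filter α q i2 s := by
  ext a
  rw [Finset.mem_filter, Finset.mem_filter, h a]


/-- The probability of observing the transcript `ω = ((x₁, f x₁), …, (x_t, f x_t))`
when `f` is drawn uniformly from the finite family `F` and `x₁, …, x_t` are
independent uniformly random points of `Fin n → Bool`. -/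
noncomputable def transcriptProb {n t : ℕ} (F : Finset ((Fin n → Bool) → Bool))
    (ω : Fin t → (Fin n → Bool) × Bool) : ℝ :=
  ((F.filter (fun f => ∀ j : Fin t, f (ω j).1 = (ω j).2)).card : ℝ)
    / ((F.card : ℝ) * ((2 : ℝ) ^ n) ^ t)

/-- The transcript of `t` uniformly random classical examples of a uniformly
random `k`-junta on the first `k` coordinates is `t(t-1)/2^(k+1)`-close in total
variation distance to the transcript for a uniformly random function. -/
theorem transcript_tv_distance_le {n k t : ℕ} (hkn : k ≤ n) :
    (1 / 2 : ℝ) * ∑ ω : Fin t → (Fin n → Bool) × Bool,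
      |transcriptProb (Finset.univ.filter
          (fun f : (Fin n → Bool) → Bool => ∀ x y : Fin n → Bool,
            (∀ i : Fin n, (i : ℕ) < k → x i = y i) → f x = f y)) ω
        - transcriptProb (Finset.univ : Finset ((Fin n → Bool) → Bool)) ω|
      ≤ (t : ℝ) * ((t : ℝ) - 1) / 2 ^ (k + 1) := by
  set FJ := (Finset.univ.filter
      (fun f : (Fin n → Bool) → Bool => ∀ x y : Fin n → Bool,
        (∀ i : Fin n, (i : ℕ) < k → x i = y i) → f x = f y)) with hFJ
  -- cardinality of the junta family
  have hFJcard : FJ.card = 2 ^ (2 ^ k) := by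
    have h := card_junta hkn (fun _ => True)
    simp only [and_true, filter_true] at h
    rw [hFJ, h, card_univ]
    simp [Fintype.card_fun]
  have hUcard : (univ : Finset ((Fin n → Bool) → Bool)).card = 2 ^ (2 ^ n) := by
    rw [card_univ]
    simp [Fintype.card_fun]
  -- numerator counts when the projections are injective
  have hnumJ : ∀ (xs : Fin t → Fin n → Bool) (bs : Fin t → Bool),
      Injective (fun j => proj hkn (xs j)) →
      (FJ.filter (fun f => ∀ j, f (xs j) = bs j)).card * 2 ^ t = 2 ^ (2 ^ k) := by
    intro xs bs hinj
    rw [hFJ, Finset.filter_filter]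
    rw [card_junta hkn (Q := fun f => ∀ j, f (xs j) = bs j)]
    have h := card_filter_eval (fun j => proj hkn (xs j)) hinj bs
    simp only [Fintype.card_fun, Fintype.card_bool, Fintype.card_fin] at h
    convert h using 3
    exact filter_eq_filter (fun g => Iff.rfl) _
  have hnumU : ∀ (xs : Fin t → Fin n → Bool) (bs : Fin t → Bool),
      Injective xs →
      ((univ : Finset ((Fin n → Bool) → Bool)).filter
        (fun f => ∀ j, f (xs j) = bs j)).card * 2 ^ t = 2 ^ (2 ^ n) := by
    intro xs bs hinj
    have h := card_filter_eval xs hinj bs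
    simp only [Fintype.card_fun, Fintype.card_bool, Fintype.card_fin] at h
    convert h using 3
    exact filter_eq_filter (fun g => Iff.rfl) _
  -- value of transcriptProb in the injective case
  have hpos2 : ((2:ℝ)^n)^t > 0 := by positivity
  have probJ : ∀ (xs : Fin t → Fin n → Bool) (bs : Fin t → Bool),
      Injective (fun j => proj hkn (xs j)) →
      transcriptProb FJ (fun j => (xs j, bs j)) = 1 / (2 ^ t * ((2:ℝ)^n)^t) := by
    intro xs bs hinj
    have e1 : transcriptProb FJ (fun j => (xs j, bs j))
        = ((FJ.filter (fun f => ∀ j, f (xs j) = bs j)).card : ℝ)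
          / ((FJ.card : ℝ) * ((2:ℝ)^n)^t) := rfl
    rw [e1, hFJcard]
    have hc : ((FJ.filter (fun f => ∀ j, f (xs j) = bs j)).card : ℝ) * 2 ^ t
        = 2 ^ (2 ^ k) := by exact_mod_cast hnumJ xs bs hinj
    rw [div_eq_div_iff (by positivity) (by positivity)]
    push_cast
    linear_combination ((2:ℝ)^n)^t * hc
  have probU : ∀ (xs : Fin t → Fin n → Bool) (bs : Fin t → Bool),
      Injective xs →
      transcriptProb univ (fun j => (xs j, bs j)) = 1 / (2 ^ t * ((2:ℝ)^n)^t) := by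
    intro xs bs hinj
    have e1 : transcriptProb (univ : Finset ((Fin n → Bool) → Bool)) (fun j => (xs j, bs j))
        = (((univ : Finset ((Fin n → Bool) → Bool)).filter
            (fun f => ∀ j, f (xs j) = bs j)).card : ℝ)
          / (((univ : Finset ((Fin n → Bool) → Bool)).card : ℝ) * ((2:ℝ)^n)^t) := rfl
    rw [e1, hUcard]
    have hc : (((univ : Finset ((Fin n → Bool) → Bool)).filter
        (fun f => ∀ j, f (xs j) = bs j)).card : ℝ) * 2 ^ t
        = 2 ^ (2 ^ n) := by exact_mod_cast hnumU xs bs hinj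
    rw [div_eq_div_iff (by positivity) (by positivity)]
    push_cast
    linear_combination ((2:ℝ)^n)^t * hc
  -- sum of transcript probabilities over labels
  have probsum : ∀ (F : Finset ((Fin n → Bool) → Bool)), F.card ≠ 0 →
      ∀ xs : Fin t → Fin n → Bool,
      ∑ bs : Fin t → Bool, transcriptProb F (fun j => (xs j, bs j)) = 1 / ((2:ℝ)^n)^t := by
    intro F hF xs
    have e1 : ∀ bs : Fin t → Bool, transcriptProb F (fun j => (xs j, bs j))
        = ((F.filter (fun f => ∀ j, f (xs j) = bs j)).card : ℝ)
          / ((F.card : ℝ) * ((2:ℝ)^n)^t) := fun bs => rfl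
    simp only [e1]
    rw [← Finset.sum_div]
    have hsn := sum_card_filter_eval F xs
    have hs : ∑ bs : Fin t → Bool, ((F.filter (fun f => ∀ j, f (xs j) = bs j)).card : ℝ)
        = (F.card : ℝ) := by
      have : (∑ bs : Fin t → Bool, (F.filter (fun f => ∀ j, f (xs j) = bs j)).card) = F.card := by
        convert hsn using 3
        exact filter_eq_filter (fun g => Iff.rfl) _
      exact_mod_cast this
    rw [hs]
    have hFc : (F.card : ℝ) ≠ 0 := Nat.cast_ne_zero.mpr hF
    field_simp
  have probnonneg : ∀ (F : Finset ((Fin n → Bool) → Bool))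
      (ω : Fin t → (Fin n → Bool) × Bool), 0 ≤ transcriptProb F ω := by
    intro F ω
    unfold transcriptProb
    positivity
  -- split the sum over transcripts
  have hsplit : ∀ G : (Fin t → (Fin n → Bool) × Bool) → ℝ,
      ∑ ω, G ω = ∑ xs : Fin t → Fin n → Bool, ∑ bs : Fin t → Bool,
        G (fun j => (xs j, bs j)) := by
    intro G
    have hp : ∑ p : (Fin t → Fin n → Bool) × (Fin t → Bool), G (fun j => (p.1 j, p.2 j))
        = ∑ xs : Fin t → Fin n → Bool, ∑ bs : Fin t → Bool, G (fun j => (xs j, bs j)) :=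
      Fintype.sum_prod_type (f := fun p : (Fin t → Fin n → Bool) × (Fin t → Bool) =>
        G (fun j => (p.1 j, p.2 j)))
    rw [← hp]
    exact (Fintype.sum_equiv
      (⟨fun p => fun j => (p.1 j, p.2 j),
        fun ω => (fun j => (ω j).1, fun j => (ω j).2),
        fun p => rfl, fun ω => by funext j; rfl⟩ :
        (Fin t → Fin n → Bool) × (Fin t → Bool) ≃ (Fin t → (Fin n → Bool) × Bool))
      (fun p => G (fun j => (p.1 j, p.2 j))) G (fun p => rfl)).symm
  rw [hsplit]
  -- per-x̄ bound
  have key : ∀ xs : Fin t → Fin n → Bool,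
      ∑ bs : Fin t → Bool, |transcriptProb FJ (fun j => (xs j, bs j))
        - transcriptProb univ (fun j => (xs j, bs j))|
      ≤ if Injective (fun j => proj hkn (xs j)) then 0 else 2 / ((2:ℝ)^n)^t := by
    intro xs
    by_cases hinj : Injective (fun j => proj hkn (xs j))
    · rw [if_pos hinj]
      have hxinj : Injective xs := by
        intro a b hab
        exact hinj (congrArg (proj hkn) hab)
      apply le_of_eq
      apply Finset.sum_eq_zero
      intro bs _
      rw [probJ xs bs hinj, probU xs bs hxinj, sub_self, abs_zero]
    · rw [if_neg hinj]
      calc ∑ bs : Fin t → Bool, |transcriptProb FJ (fun j => (xs j, bs j))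
            - transcriptProb univ (fun j => (xs j, bs j))|
          ≤ ∑ bs : Fin t → Bool, (transcriptProb FJ (fun j => (xs j, bs j))
            + transcriptProb univ (fun j => (xs j, bs j))) := by
            apply Finset.sum_le_sum
            intro bs _
            calc |transcriptProb FJ (fun j => (xs j, bs j))
                  - transcriptProb univ (fun j => (xs j, bs j))|
                ≤ |transcriptProb FJ (fun j => (xs j, bs j))|
                  + |transcriptProb univ (fun j => (xs j, bs j))| := abs_sub _ _
              _ = _ := by
                  rw [abs_of_nonneg (probnonneg _ _), abs_of_nonneg (probnonneg _ _)]
        _ = 2 / ((2:ℝ)^n)^t := by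
            rw [Finset.sum_add_distrib,
              probsum FJ (by rw [hFJcard]; positivity) xs,
              probsum univ (by rw [hUcard]; positivity) xs]
            ring
  -- the set of bad sample tuples
  set B := univ.filter (fun xs : Fin t → Fin n → Bool =>
      ¬ Injective (fun j => proj hkn (xs j))) with hB
  have h1 : ∑ xs : Fin t → Fin n → Bool, ∑ bs : Fin t → Bool,
      |transcriptProb FJ (fun j => (xs j, bs j))
        - transcriptProb univ (fun j => (xs j, bs j))|
      ≤ (B.card : ℝ) * (2 / ((2:ℝ)^n)^t) := by
    calc ∑ xs : Fin t → Fin n → Bool, ∑ bs : Fin t → Bool,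
        |transcriptProb FJ (fun j => (xs j, bs j))
          - transcriptProb univ (fun j => (xs j, bs j))|
        ≤ ∑ xs : Fin t → Fin n → Bool,
            (if Injective (fun j => proj hkn (xs j)) then 0 else 2/((2:ℝ)^n)^t) :=
          Finset.sum_le_sum (fun xs _ => key xs)
      _ = ∑ xs ∈ B, (2/((2:ℝ)^n)^t) := by
          rw [Finset.sum_filter]
          apply Finset.sum_congr rfl
          intro xs _
          by_cases h : Injective (fun j => proj hkn (xs j)) <;> simp [h]
      _ = (B.card : ℝ) * (2/((2:ℝ)^n)^t) := by
          rw [Finset.sum_const, nsmul_eq_mul]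
  have hBsub : B ⊆ (univ.filter (fun p : Fin t × Fin t => p.1 < p.2)).biUnion
      (fun p => univ.filter (fun xs : Fin t → Fin n → Bool =>
        ∀ i : Fin k, xs p.1 (Fin.castLE hkn i) = xs p.2 (Fin.castLE hkn i))) := by
    intro xs hxs
    rw [hB, mem_filter] at hxs
    obtain ⟨-, hni⟩ := hxs
    rw [Injective] at hni
    push_neg at hni
    obtain ⟨a, b, hab, hne⟩ := hni
    have hab' : proj hkn (xs a) = proj hkn (xs b) := hab
    rcases lt_or_gt_of_ne hne with h | h
    · refine Finset.mem_biUnion.2 ⟨(a, b), by simp [h], ?_⟩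
      simp only [mem_filter, mem_univ, true_and]
      intro i
      exact congrFun hab' i
    · refine Finset.mem_biUnion.2 ⟨(b, a), by simp [h], ?_⟩
      simp only [mem_filter, mem_univ, true_and]
      intro i
      exact (congrFun hab' i).symm
  have hBcard : (B.card : ℝ) ≤ ((t:ℝ)*((t:ℝ)-1)/2) * (((2:ℝ)^n)^t / 2^k) := by
    have h2 : B.card ≤ ∑ p ∈ univ.filter (fun p : Fin t × Fin t => p.1 < p.2),
        (univ.filter (fun xs : Fin t → Fin n → Bool =>
          ∀ i : Fin k, xs p.1 (Fin.castLE hkn i) = xs p.2 (Fin.castLE hkn i))).card :=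
      le_trans (Finset.card_le_card hBsub) Finset.card_biUnion_le
    have h3 : ∀ p ∈ univ.filter (fun p : Fin t × Fin t => p.1 < p.2),
        ((univ.filter (fun xs : Fin t → Fin n → Bool =>
          ∀ i : Fin k, xs p.1 (Fin.castLE hkn i) = xs p.2 (Fin.castLE hkn i))).card : ℝ)
          = ((2:ℝ)^n)^t / 2^k := by
      intro p hp
      have hpq : p.1 ≠ p.2 := ne_of_lt (by simpa using (mem_filter.1 hp).2)
      have hnat := card_collision (t := t) hkn hpq
      have hr : ((univ.filter (fun xs : Fin t → Fin n → Bool =>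
          ∀ i : Fin k, xs p.1 (Fin.castLE hkn i) = xs p.2 (Fin.castLE hkn i))).card : ℝ)
          * 2^(n+k) = 2^n * 2^(t*n) := by exact_mod_cast hnat
      have hh : ((2:ℝ)^n)^t / 2^k * 2^(n+k) = 2^n * 2^(t*n) := by
        have e1 : ((2:ℝ)^n)^t = 2^(t*n) := by rw [← pow_mul, mul_comm]
        have e2 : ((2:ℝ))^(n+k) = 2^n * 2^k := pow_add 2 n k
        rw [e1, e2]
        field_simp
      exact mul_right_cancel₀ (b := (2:ℝ)^(n+k)) (by positivity) (hr.trans hh.symm)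
    calc (B.card : ℝ)
        ≤ ((∑ p ∈ univ.filter (fun p : Fin t × Fin t => p.1 < p.2),
            (univ.filter (fun xs : Fin t → Fin n → Bool =>
            ∀ i : Fin k, xs p.1 (Fin.castLE hkn i) = xs p.2 (Fin.castLE hkn i))).card : ℕ) : ℝ) := by
          exact_mod_cast h2
      _ = ∑ p ∈ univ.filter (fun p : Fin t × Fin t => p.1 < p.2),
            (((univ.filter (fun xs : Fin t → Fin n → Bool =>
            ∀ i : Fin k, xs p.1 (Fin.castLE hkn i) = xs p.2 (Fin.castLE hkn i))).card : ℕ) : ℝ) := by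
          push_cast
          rfl
      _ = ∑ p ∈ univ.filter (fun p : Fin t × Fin t => p.1 < p.2), (((2:ℝ)^n)^t / 2^k) :=
          Finset.sum_congr rfl h3
      _ = ((univ.filter (fun p : Fin t × Fin t => p.1 < p.2)).card : ℝ) * (((2:ℝ)^n)^t / 2^k) := by
          rw [Finset.sum_const, nsmul_eq_mul]
      _ = ((t:ℝ)*((t:ℝ)-1)/2) * (((2:ℝ)^n)^t / 2^k) := by
          rw [card_lt_pairs_le]
  calc (1/2 : ℝ) * ∑ xs : Fin t → Fin n → Bool, ∑ bs : Fin t → Bool,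
        |transcriptProb FJ (fun j => (xs j, bs j))
          - transcriptProb univ (fun j => (xs j, bs j))|
      ≤ (1/2 : ℝ) * ((B.card : ℝ) * (2 / ((2:ℝ)^n)^t)) := by
        apply mul_le_mul_of_nonneg_left h1
        norm_num
    _ ≤ (1/2 : ℝ) * ((((t:ℝ)*((t:ℝ)-1)/2) * (((2:ℝ)^n)^t / 2^k)) * (2 / ((2:ℝ)^n)^t)) := by
        apply mul_le_mul_of_nonneg_left
          (mul_le_mul_of_nonneg_right hBcard (by positivity))
        norm_num
    _ = (t:ℝ)*((t:ℝ)-1) / (2*2^k) * (((2:ℝ)^n)^t / ((2:ℝ)^n)^t) := by ring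
    _ = (t : ℝ) * ((t : ℝ) - 1) / 2 ^ (k + 1) := by
        rw [div_self (by positivity : ((2:ℝ)^n)^t ≠ 0), mul_one, pow_succ]
        ring
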